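/- The set of leaf partitions induced by internal edges is an invariant that changes by at most one element per rotation: if T' is obtained from T by one rotation, then the symmetric difference of the sets of leaf-partitions induced by internal edges of T and T' has size at most 2 (each tree has at most one edge not common with the other). -/
import Mathlib


inductive BT : Type
  | leaf : BT
  | node : BT → BT → BT
deriving DecidableEq

namespace BT

/-- number of internal nodes -/
def size : BT → ℕ
  | leaf => 0
  | node l r => size l + size r + 1

/-- number of leaves -/
def nl (t : BT) : ℕ := size t + 1

/-- one (right) rotation somewhere in the tree -/
inductive Rot : BT → BT → Prop
  | root (a b c : BT) : Rot (node (node a b) c) (node a (node b c))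
  | congrL {l l' : BT} (r : BT) : Rot l l' → Rot (node l r) (node l' r)
  | congrR (l : BT) {r r' : BT} : Rot r r' → Rot (node l r) (node l r')

/-- a rotation move: a right rotation or its inverse (a left rotation) -/
def Move (s t : BT) : Prop := Rot s t ∨ Rot t s

/-- `Chain n s t`: `s` is transformed into `t` by `n` rotation moves -/
inductive Chain : ℕ → BT → BT → Prop
  | refl (t : BT) : Chain 0 t t
  | step {n : ℕ} {s u t : BT} : Move s u → Chain n u t → Chain (n + 1) s t

/-- rotation distance -/
noncomputable def dR (s t : BT) : ℕ := sInf {n | Chain n s t}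

def isNode : BT → Bool
  | leaf => false
  | node _ _ => true

/-- the multiset of leaf partitions induced by internal edges, where the leaves of the
tree are numbered from `k` on, left to right; each internal edge is recorded by the
set of leaf numbers below it. -/
def iparts : BT → ℕ → Multiset (Finset ℕ)
  | leaf, _ => 0
  | node l r, k =>
      ((if isNode l then {Finset.Ico k (k + nl l)} else 0) + iparts l k)
        + ((if isNode r then {Finset.Ico (k + nl l) (k + nl l + nl r)} else 0)
            + iparts r (k + nl l))

/-- number of common edge pairs -/
def commonEdges (s t : BT) : ℕ := ((iparts s 0) ∩ (iparts t 0)).card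


lemma rot_size_eq {s t : BT} (h : Rot s t) : size s = size t := by
  induction h with
  | root a b c => simp [size]; omega
  | congrL r h ih => simp [size, ih]
  | congrR l h ih => simp [size, ih]

lemma rot_nl_eq {s t : BT} (h : Rot s t) : nl s = nl t := by
  simp [nl, rot_size_eq h]

lemma rot_isNode {s t : BT} (h : Rot s t) : isNode s = true ∧ isNode t = true := by
  cases h <;> simp [isNode]

lemma rot_iparts {s t : BT} (h : Rot s t) :
    ∀ k, ∃ M X Y, iparts s k = {X} + M ∧ iparts t k = {Y} + M := by
  induction h with
  | root a b c =>
      intro k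
      refine ⟨((if isNode a then {Finset.Ico k (k + nl a)} else 0) + iparts a k)
          + ((if isNode b then {Finset.Ico (k + nl a) (k + nl a + nl b)} else 0)
              + iparts b (k + nl a))
          + ((if isNode c then {Finset.Ico (k + nl a + nl b) (k + nl a + nl b + nl c)} else 0)
              + iparts c (k + nl a + nl b)),
        Finset.Ico k (k + nl a + nl b),
        Finset.Ico (k + nl a) (k + nl a + nl b + nl c), ?_, ?_⟩ <;>
      · simp only [iparts, isNode, if_true, nl, size]
        ring_nf
        try abel_nf
        try ring_nf
  | @congrL l l' r h ih =>
      intro k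
      obtain ⟨M, X, Y, h1, h2⟩ := ih k
      obtain ⟨hn, hn'⟩ := rot_isNode h
      refine ⟨{Finset.Ico k (k + nl l)} + M
          + ((if isNode r then {Finset.Ico (k + nl l) (k + nl l + nl r)} else 0)
              + iparts r (k + nl l)), X, Y, ?_, ?_⟩
      · simp only [iparts, hn, if_true, h1]
        abel
      · simp only [iparts, hn', if_true, h2, ← rot_nl_eq h]
        abel
  | @congrR l r r' h ih =>
      intro k
      obtain ⟨M, X, Y, h1, h2⟩ := ih (k + nl l)
      obtain ⟨hn, hn'⟩ := rot_isNode h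
      refine ⟨((if isNode l then {Finset.Ico k (k + nl l)} else 0) + iparts l k)
          + ({Finset.Ico (k + nl l) (k + nl l + nl r)} + M), X, Y, ?_, ?_⟩
      · simp only [iparts, hn, if_true, h1]
        abel
      · simp only [iparts, hn', if_true, h2, ← rot_nl_eq h]
        abel

lemma card_symmDiff_le (X Y : Finset ℕ) (M : Multiset (Finset ℕ)) :
    (symmDiff ({X} + M).toFinset ({Y} + M).toFinset).card ≤ 2 := by
  have hsub : symmDiff ({X} + M).toFinset ({Y} + M).toFinset ⊆ {X, Y} := by
    intro z hz
    rw [Finset.mem_symmDiff] at hz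
    simp only [Finset.mem_symmDiff, Multiset.mem_toFinset, Multiset.mem_add,
      Multiset.mem_singleton, Finset.mem_insert, Finset.mem_singleton] at hz ⊢
    tauto
  calc (symmDiff ({X} + M).toFinset ({Y} + M).toFinset).card
      ≤ ({X, Y} : Finset (Finset ℕ)).card := Finset.card_le_card hsub
    _ ≤ 2 := Finset.card_insert_le _ _ |>.trans (by simp)

theorem rotation_changes_at_most_one_partition (T T' : BT) (h : Move T T') :
    (symmDiff (iparts T 0).toFinset (iparts T' 0).toFinset).card ≤ 2 := by
  obtain hR | hR := h
  · obtain ⟨M, X, Y, h1, h2⟩ := rot_iparts hR 0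
    rw [h1, h2]; exact card_symmDiff_le X Y M
  · obtain ⟨M, X, Y, h1, h2⟩ := rot_iparts hR 0
    rw [h1, h2]; exact card_symmDiff_le Y X M

end BT
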